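/- Let M be a metric space, I : M → M a distance-preserving map, p ∈ M, and n ∈ ℕ, and suppose the set O_n = {I^i(p) : i = 0, ..., n} has at least two elements. Set r = nnd(I^{⌊n/2⌋}(p), O_n) and let S = { I^j(p) : ⌈n/2⌉ < j ≤ n and dist(p, I^j(p)) < r }. Then S is contained in the open ball of radius r around p, any two distinct points of S are at distance at least r from each other, and |NND(O_n)| ≤ |S| + 1. -/

import Mathlib

/-- The nearest neighbor distance of `x` in `X`. -/
noncomputable def nnd {M : Type*} [MetricSpace M] (x : M) (X : Set M) : ℝ :=
  sInf (dist x '' (X \ {x}))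

/-- The set of nearest neighbor distances of a set `X`. -/
noncomputable def NND {M : Type*} [MetricSpace M] (X : Set M) : Set ℝ :=
  (fun x => nnd x X) '' X

lemma nnd_le_dist' {M : Type*} [MetricSpace M] {X : Set M} (hfin : X.Finite) {x y : M}
    (hy : y ∈ X) (hne : y ≠ x) : nnd x X ≤ dist x y := by
  apply csInf_le ((hfin.diff (t := _)).image _).bddBelow
  exact ⟨y, ⟨hy, hne⟩, rfl⟩

lemma nnd_exists' {M : Type*} [MetricSpace M] {X : Set M} (hfin : X.Finite) {x : M}
    (hne : (X \ {x}).Nonempty) : ∃ y ∈ X, y ≠ x ∧ nnd x X = dist x y := by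
  have h := (hne.image (dist x)).csInf_mem ((hfin.diff (t := _)).image _)
  obtain ⟨y, ⟨hy, hyx⟩, he⟩ := h
  exact ⟨y, hy, hyx, he.symm⟩

/-- For an orbit segment `O_n = {I^i(p) : i = 0, …, n}` of an isometry with at least two
elements, let `r = nnd(I^{⌊n/2⌋}(p), O_n)` and
`S = {I^j(p) : ⌈n/2⌉ < j ≤ n, dist(p, I^j(p)) < r}`.  Then `S` lies in the open `r`-ball
around `p`, distinct points of `S` are at distance at least `r` apart, and
`|NND(O_n)| ≤ |S| + 1`. -/
theorem nnd_orbit_packing {M : Type*} [MetricSpace M]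
    (I : M → M) (hI : Isometry I) (p : M) (n : ℕ)
    (O : Set M) (hO : O = {x | ∃ i : ℕ, i ≤ n ∧ x = I^[i] p})
    (h2 : O.Nontrivial)
    (r : ℝ) (hr : r = nnd (I^[n / 2] p) O)
    (S : Set M)
    (hS : S = {x | ∃ j : ℕ, (n + 1) / 2 < j ∧ j ≤ n ∧ dist p (I^[j] p) < r ∧ x = I^[j] p}) :
    S ⊆ Metric.ball p r ∧ (S.Pairwise fun x y => r ≤ dist x y) ∧
      (NND O).encard ≤ S.encard + 1 := by
  have hmem : ∀ i ≤ n, I^[i] p ∈ O := fun i hi => hO ▸ ⟨i, hi, rfl⟩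
  have hOfin : O.Finite := by
    rw [hO]
    have : {x | ∃ i : ℕ, i ≤ n ∧ x = I^[i] p} = (fun i => I^[i] p) '' (Set.Iic n) := by
      ext x
      simp only [Set.mem_image, Set.mem_Iic, Set.mem_setOf_eq]
      constructor
      · rintro ⟨i, hi, rfl⟩; exact ⟨i, hi, rfl⟩
      · rintro ⟨i, hi, rfl⟩; exact ⟨i, hi, rfl⟩
    rw [this]
    exact (Set.finite_Iic n).image _
  have hdiffne : ∀ x : M, (O \ {x}).Nonempty := by
    intro x
    obtain ⟨z, hz, hzx⟩ := h2.exists_ne x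
    exact ⟨z, hz, hzx⟩
  have hIiter : ∀ a : ℕ, Isometry (I^[a]) := by
    intro a
    induction a with
    | zero => simpa using isometry_id
    | succ a ih => rw [Function.iterate_succ']; exact hI.comp ih
  have hdist : ∀ a b : ℕ, dist (I^[a] p) (I^[a + b] p) = dist p (I^[b] p) := by
    intro a b
    rw [Function.iterate_add_apply]
    exact (hIiter a).dist_eq _ _
  -- difference of indices
  have hdiff : ∀ a b : ℕ, ∃ d, (a + d = b ∨ b + d = a) ∧
      dist (I^[a] p) (I^[b] p) = dist p (I^[d] p) := by
    intro a b
    rcases le_total a b with h | h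
    · obtain ⟨e, rfl⟩ : ∃ e, b = a + e := ⟨b - a, by omega⟩
      exact ⟨e, Or.inl rfl, hdist a e⟩
    · obtain ⟨e, rfl⟩ : ∃ e, a = b + e := ⟨a - b, by omega⟩
      exact ⟨e, Or.inr rfl, by rw [dist_comm]; exact hdist b e⟩
  -- realizing a shift near index i
  have key : ∀ i d : ℕ, i ≤ n → (d ≤ i ∨ d ≤ n - i) →
      ∃ j, j ≤ n ∧ dist (I^[i] p) (I^[j] p) = dist p (I^[d] p) := by
    intro i d hi hd
    rcases le_or_gt d (n - i) with h | h
    · exact ⟨i + d, by omega, hdist i d⟩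
    · obtain ⟨e, rfl⟩ : ∃ e, i = e + d := ⟨i - d, by omega⟩
      exact ⟨e, by omega, by rw [dist_comm]; exact hdist e d⟩
  -- r is attained
  obtain ⟨y0, hy0O, hy0ne, hy0eq⟩ := nnd_exists' hOfin (hdiffne (I^[n / 2] p))
  have hrpos : 0 < r := by
    rw [hr, hy0eq]
    exact dist_pos.mpr (Ne.symm hy0ne)
  obtain ⟨j0, hj0, rfl⟩ : ∃ j0, j0 ≤ n ∧ y0 = I^[j0] p := by rw [hO] at hy0O; exact hy0O
  obtain ⟨d0, hd0, hd0e⟩ := hdiff (n / 2) j0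
  have hreq : r = dist p (I^[d0] p) := by rw [hr, hy0eq, hd0e]
  -- every nnd value is at most r
  have hub : ∀ i ≤ n, nnd (I^[i] p) O ≤ r := by
    intro i hi
    obtain ⟨j, hj, hje⟩ := key i d0 hi (by omega)
    have heq : dist (I^[i] p) (I^[j] p) = r := hje.trans hreq.symm
    have hne : I^[j] p ≠ I^[i] p := by
      intro h
      rw [h, dist_self] at heq
      exact absurd heq.symm (ne_of_gt hrpos)
    calc nnd (I^[i] p) O ≤ dist (I^[i] p) (I^[j] p) := nnd_le_dist' hOfin (hmem j hj) hne
      _ = r := heq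
  -- values below r come from S
  refine ⟨?_, ?_, ?_⟩
  · intro x hx
    rw [hS] at hx
    obtain ⟨j, _, _, hlt, rfl⟩ := hx
    exact Metric.mem_ball'.mpr hlt
  · intro x hx y hy hxy
    rw [hS] at hx hy
    obtain ⟨j, hj1, hj2, _, rfl⟩ := hx
    obtain ⟨k, hk1, hk2, _, rfl⟩ := hy
    obtain ⟨d, hd, hde⟩ := hdiff j k
    have hpos : 0 < dist p (I^[d] p) := by rw [← hde]; exact dist_pos.mpr hxy
    obtain ⟨j', hj', hj'e⟩ := key (n / 2) d (by omega) (by omega)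
    have hne : I^[j'] p ≠ I^[n / 2] p := by
      refine (dist_pos.mp ?_).symm
      rw [hj'e]; exact hpos
    rw [hde, ← hj'e, hr]
    exact nnd_le_dist' hOfin (hmem j' hj') hne
  · have hsub : NND O ⊆ insert r ((dist p) '' S) := by
      rintro v ⟨x, hxO, rfl⟩
      obtain ⟨i, hi, rfl⟩ : ∃ i, i ≤ n ∧ x = I^[i] p := by rw [hO] at hxO; exact hxO
      rcases eq_or_lt_of_le (hub i hi) with h | h
      · exact Set.mem_insert_iff.mpr (Or.inl h)
      · obtain ⟨y, hyO, hyne, hveq⟩ := nnd_exists' hOfin (hdiffne (I^[i] p))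
        obtain ⟨j, hj, rfl⟩ : ∃ j, j ≤ n ∧ y = I^[j] p := by rw [hO] at hyO; exact hyO
        obtain ⟨d, hd, hde⟩ := hdiff i j
        have hvd : nnd (I^[i] p) O = dist p (I^[d] p) := hveq.trans hde
        have hpos : 0 < dist p (I^[d] p) := by
          rw [← hde]
          exact dist_pos.mpr (Ne.symm hyne)
        have hdn : (n + 1) / 2 < d := by
          by_contra hcon
          push_neg at hcon
          obtain ⟨j', hj', hj'e⟩ := key (n / 2) d (by omega) (by omega)
          have hne : I^[j'] p ≠ I^[n / 2] p := by
            refine (dist_pos.mp ?_).symm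
            rw [hj'e]; exact hpos
          have := nnd_le_dist' hOfin (hmem j' hj') hne
          rw [← hr] at this
          rw [hj'e, ← hvd] at this
          exact absurd h (not_lt.mpr this)
        refine Set.mem_insert_iff.mpr (Or.inr ⟨I^[d] p, ?_, hvd.symm⟩)
        rw [hS]
        exact ⟨d, hdn, by omega, by rw [← hvd]; exact h, rfl⟩
    calc (NND O).encard ≤ (insert r ((dist p) '' S)).encard := Set.encard_mono hsub
      _ ≤ ((dist p) '' S).encard + 1 := Set.encard_insert_le _ _
      _ ≤ S.encard + 1 := add_le_add_left (Set.encard_image_le _ _) 1
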